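/- Let H be a hypergraph that decomposes into matchings M_0,…,M_{t−1}, each with n edges and with orderings ℓ_0,…,ℓ_{t−1} respectively, and let x ∈ [n] and r < Δ(H). If ms(ℓ_i, ℓ_{i+r}) ≥ n − x for all i ∈ [t−r], then ms_r(H) ≥ rn − x; and if ms(ℓ_i, ℓ_{(i+r) mod t}) ≥ n − x for all i ∈ [t], then cms_r(H) ≥ rn − x. -/

import Mathlib

/-- A hypergraph: a finite vertex type, a finite edge (label) type and an incidence
relation; distinct (parallel) edges may be incident with the same vertices. -/
structure Hypergraph' where
  V : Type
  E : Type
  fintV : Fintype V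
  fintE : Fintype E
  inc : E → V → Bool

namespace Hypergraph'

/-- The number ε of edges of `H`. -/
def edgeCard (H : Hypergraph') : ℕ :=
  letI := H.fintE
  Fintype.card H.E

/-- The degree of a vertex: the number of edges incident with it. -/
def degree (H : Hypergraph') (v : H.V) : ℕ :=
  letI := H.fintE
  (Finset.univ.filter (fun e => H.inc e v = true)).card

/-- The maximum degree Δ(H). -/
def maxDegree (H : Hypergraph') : ℕ :=
  letI := H.fintV
  Finset.univ.sup H.degree

/-- An ordering (labelling) of `H`, encoded by its ε-periodic enumeration:
`f i` is the edge whose label is `i % ε`; on `[ε]`, `f` is a bijection onto the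
edge set. -/
structure IsOrdering (H : Hypergraph') (f : ℕ → H.E) : Prop where
  periodic : ∀ i, f (i + H.edgeCard) = f i
  inj : ∀ i j, i < H.edgeCard → j < H.edgeCard → f i = f j → i = j
  surj : ∀ e : H.E, ∃ i, i < H.edgeCard ∧ f i = e

/-- The degree of `v` in the hypergraph `H(S)` formed (with multiplicity) by the
sequence `S` of `s` (cyclically) consecutive edges with labels `j, …, j+s-1`
taken modulo ε. -/
def windowDeg (H : Hypergraph') (f : ℕ → H.E) (j s : ℕ) (v : H.V) : ℕ :=
  ((Finset.range s).filter (fun i => H.inc (f (j + i)) v = true)).card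

/-- Every sequence of `s` consecutive edges of the ordering `f` forms a hypergraph of
maximum degree at most `r`.  A window of `s` consecutive edges starts at a label `j`
with `j + s ≤ (a+1)·ε`, where `a·ε ≤ s < (a+1)·ε` (i.e. `a = s / ε`). -/
def msOK (H : Hypergraph') (f : ℕ → H.E) (r s : ℕ) : Prop :=
  ∀ j v, j + s ≤ (s / H.edgeCard + 1) * H.edgeCard → H.windowDeg f j s v ≤ r

/-- Every sequence of `s` cyclically consecutive edges of the ordering `f` forms a
hypergraph of maximum degree at most `r`. -/
def cmsOK (H : Hypergraph') (f : ℕ → H.E) (r s : ℕ) : Prop :=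
  ∀ j v, H.windowDeg f j s v ≤ r

/-- ms_r(ℓ): the largest `s` such that every `s` consecutive edges of `ℓ` form a
hypergraph of maximum degree at most `r`. -/
noncomputable def msrOf (H : Hypergraph') (f : ℕ → H.E) (r : ℕ) : ℕ :=
  sSup {s | H.msOK f r s}

/-- cms_r(ℓ). -/
noncomputable def cmsrOf (H : Hypergraph') (f : ℕ → H.E) (r : ℕ) : ℕ :=
  sSup {s | H.cmsOK f r s}

/-- ms_r(H): the maximum of ms_r(ℓ) over all orderings ℓ of H. -/
noncomputable def msr (H : Hypergraph') (r : ℕ) : ℕ :=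
  sSup {s | ∃ f, H.IsOrdering f ∧ H.msOK f r s}

/-- cms_r(H): the maximum of cms_r(ℓ) over all orderings ℓ of H. -/
noncomputable def cmsr (H : Hypergraph') (r : ℕ) : ℕ :=
  sSup {s | ∃ f, H.IsOrdering f ∧ H.cmsOK f r s}

end Hypergraph'

/-- `ms(ℓ, ℓ') ≥ s`, where `f` enumerates the edges of a matching with `n` edges
(in the order of its labelling ℓ) and `g` enumerates the edges of a second,
edge-disjoint matching (in the order of its labelling ℓ'): every `s` consecutive
edges of `ℓ ∨ₛ ℓ'` (the last `s-1` edges of `ℓ` followed by the first `s-1` edges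
of `ℓ'`) form a hypergraph of maximum degree at most 1, i.e. a matching. -/
def Hypergraph'.pairOK (H : Hypergraph') (f g : ℕ → H.E) (n s : ℕ) : Prop :=
  ∀ p, p + 1 < s → ∀ v : H.V,
    ((Finset.range (s - 1 - p)).filter (fun q => H.inc (f (n - 1 - q)) v = true)).card +
    ((Finset.range (p + 1)).filter (fun q => H.inc (g q) v = true)).card ≤ 1

section Helpers

namespace Hypergraph'

/-- The standard concatenated enumeration of a matching decomposition. -/
def fEnum (H : Hypergraph') (t n : ℕ) (M : ℕ → ℕ → H.E) : ℕ → H.E :=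
  fun k => M (k / n % t) (k % n)

lemma window_split (H : Hypergraph') (f : ℕ → H.E) (j s₁ s₂ : ℕ) (v : H.V) :
    H.windowDeg f j (s₁ + s₂) v = H.windowDeg f j s₁ v + H.windowDeg f (j + s₁) s₂ v := by
  simp only [Hypergraph'.windowDeg, Finset.card_filter]
  rw [Finset.sum_range_add]
  congr 1
  refine Finset.sum_congr rfl fun i _ => ?_
  rw [add_assoc]

lemma fEnum_eval (H : Hypergraph') (t n : ℕ) (M : ℕ → ℕ → H.E) (hn : 0 < n)
    (j k : ℕ) (h : j % n + k < n) :
    H.fEnum t n M (j + k) = M (j / n % t) (j % n + k) := by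
  have h1 : j + k = n * (j / n) + (j % n + k) := by
    have hj := Nat.div_add_mod j n; omega
  unfold fEnum
  rw [h1, Nat.mul_add_div hn, Nat.mul_add_mod, Nat.div_eq_of_lt h, Nat.mod_eq_of_lt h, add_zero]

end Hypergraph'

end Helpers
namespace Hypergraph'

lemma single_block (H : Hypergraph') (t n : ℕ) (M : ℕ → ℕ → H.E)
    (hmatch : ∀ i, i < t → ∀ v : H.V,
      ((Finset.range n).filter (fun m => H.inc (M i m) v = true)).card ≤ 1)
    (hn : 0 < n) (ht0 : 0 < t) (j s : ℕ) (hs : j % n + s ≤ n) (v : H.V) :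
    H.windowDeg (H.fEnum t n M) j s v ≤ 1 := by
  refine le_trans ?_ (hmatch (j / n % t) (Nat.mod_lt _ ht0) v)
  unfold windowDeg
  apply Finset.card_le_card_of_injOn (fun k => j % n + k)
  · intro k hk
    simp only [Finset.coe_filter, Set.mem_setOf_eq, Finset.mem_coe, Finset.mem_filter, Finset.mem_range] at hk ⊢
    have hlt : j % n + k < n := by omega
    rw [H.fEnum_eval t n M hn j k hlt] at hk
    exact ⟨by omega, hk.2⟩
  · intro a _ b _ hab
    exact Nat.add_left_cancel hab

lemma multi_block (H : Hypergraph') (t n : ℕ) (M : ℕ → ℕ → H.E)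
    (hmatch : ∀ i, i < t → ∀ v : H.V,
      ((Finset.range n).filter (fun m => H.inc (M i m) v = true)).card ≤ 1)
    (hn : 0 < n) (ht0 : 0 < t) (k : ℕ) :
    ∀ j s, j % n + s ≤ k * n → ∀ v : H.V,
      H.windowDeg (H.fEnum t n M) j s v ≤ k := by
  induction k with
  | zero =>
    intro j s hs v
    have : s = 0 := by omega
    subst this
    simp [windowDeg]
  | succ k ih =>
    intro j s hs v
    by_cases h : j % n + s ≤ n
    · exact le_trans (H.single_block t n M hmatch hn ht0 j s h v) (by omega)
    · push_neg at h
      have hmod : j % n < n := Nat.mod_lt _ hn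
      have hs1 : s = (n - j % n) + (s - (n - j % n)) := by omega
      rw [hs1, H.window_split]
      have h1 : H.windowDeg (H.fEnum t n M) j (n - j % n) v ≤ 1 :=
        H.single_block t n M hmatch hn ht0 j _ (by omega) v
      have hjmod : (j + (n - j % n)) % n = 0 := by
        have h2 : j + (n - j % n) = n * (j / n) + n := by
          have := Nat.div_add_mod j n; omega
        rw [h2, ← Nat.mul_succ]
        exact Nat.mul_mod_right _ _
      have h2 : H.windowDeg (H.fEnum t n M) (j + (n - j % n)) (s - (n - j % n)) v ≤ k := by
        apply ih
        rw [hjmod]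
        have hkn : (k + 1) * n = k * n + n := by ring
        rw [hkn] at hs
        omega
      omega

lemma card_filter_reflect (a : ℕ) (P : ℕ → Prop) [DecidablePred P] :
    ((Finset.range a).filter P).card = ((Finset.range a).filter (fun q => P (a - 1 - q))).card := by
  apply Finset.card_nbij (fun k => a - 1 - k)
  · intro k hk
    simp only [Finset.coe_filter, Set.mem_setOf_eq, Finset.mem_coe, Finset.mem_filter, Finset.mem_range] at hk ⊢
    have hh : a - 1 - (a - 1 - k) = k := by omega
    exact ⟨by omega, by rw [hh]; exact hk.2⟩
  · intro p hp q hq hpq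
    simp only [Finset.coe_filter, Set.mem_setOf_eq, Finset.mem_range] at hp hq
    simp only at hpq
    omega
  · intro q hq
    simp only [Finset.coe_filter, Set.mem_setOf_eq, Finset.mem_range] at hq
    refine ⟨a - 1 - q, ?_, by simp only []; omega⟩
    simp only [Finset.coe_filter, Set.mem_setOf_eq, Finset.mem_range]
    exact ⟨by omega, hq.2⟩

/-- The first (tail) segment of the window, counted in pairOK form. -/
lemma tail_count (H : Hypergraph') (t n : ℕ) (M : ℕ → ℕ → H.E) (hn : 0 < n)
    (j : ℕ) (v : H.V) :
    H.windowDeg (H.fEnum t n M) j (n - j % n) v =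
      ((Finset.range (n - j % n)).filter
        (fun q => H.inc (M (j / n % t) (n - 1 - q)) v = true)).card := by
  unfold windowDeg
  have hmod : j % n < n := Nat.mod_lt _ hn
  have h1 : (Finset.range (n - j % n)).filter
      (fun i => H.inc (H.fEnum t n M (j + i)) v = true) =
      (Finset.range (n - j % n)).filter
      (fun k => H.inc (M (j / n % t) (j % n + k)) v = true) := by
    apply Finset.filter_congr
    intro k hk
    rw [Finset.mem_range] at hk
    rw [H.fEnum_eval t n M hn j k (by omega)]
  rw [h1, card_filter_reflect]
  congr 1
  apply Finset.filter_congr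
  intro q hq
  rw [Finset.mem_range] at hq
  have hh : j % n + (n - j % n - 1 - q) = n - 1 - q := by omega
  rw [hh]

/-- The last (head) segment of the window, counted in pairOK form. -/
lemma head_count (H : Hypergraph') (t n : ℕ) (M : ℕ → ℕ → H.E) (hn : 0 < n)
    (j b : ℕ) (hj : j % n = 0) (hb : b ≤ n) (v : H.V) :
    H.windowDeg (H.fEnum t n M) j b v =
      ((Finset.range b).filter (fun q => H.inc (M (j / n % t) q) v = true)).card := by
  unfold windowDeg
  congr 1
  apply Finset.filter_congr
  intro k hk
  rw [Finset.mem_range] at hk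
  rw [H.fEnum_eval t n M hn j k (by omega), hj, Nat.zero_add]

end Hypergraph'
namespace Hypergraph'

/-- The main window bound: any window of length `r*n - x` has degree at most `r`,
provided the pair condition holds when needed. -/
lemma main_window (H : Hypergraph') (t n x r : ℕ) (M : ℕ → ℕ → H.E)
    (hmatch : ∀ i, i < t → ∀ v : H.V,
      ((Finset.range n).filter (fun m => H.inc (M i m) v = true)).card ≤ 1)
    (hn : 0 < n) (ht0 : 0 < t) (hx : x < n) (hr1 : 1 ≤ r)
    (j : ℕ) (v : H.V)
    (hp : x < j % n → H.pairOK (M (j / n % t)) (M ((j / n % t + r) % t)) n (n - x)) :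
    H.windowDeg (H.fEnum t n M) j (r * n - x) v ≤ r := by
  have hnr : n ≤ r * n := Nat.le_mul_of_pos_left n hr1
  by_cases hd : j % n ≤ x
  · apply H.multi_block t n M hmatch hn ht0 r j _ _ v
    omega
  · push_neg at hd
    obtain ⟨R, rfl⟩ : ∃ R, r = R + 1 := ⟨r - 1, by omega⟩
    have hmod : j % n < n := Nat.mod_lt _ hn
    have hRn : (R + 1) * n = R * n + n := by ring
    have hsplit : (R + 1) * n - x = (n - j % n) + (R * n + (j % n - x)) := by omega
    rw [hsplit, H.window_split, H.window_split]
    -- block boundary facts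
    have hja : j + (n - j % n) = n * (j / n) + n := by
      have := Nat.div_add_mod j n; omega
    have hjam : (j + (n - j % n)) % n = 0 := by
      rw [hja, ← Nat.mul_succ]; exact Nat.mul_mod_right _ _
    -- middle part
    have hmid : H.windowDeg (H.fEnum t n M) (j + (n - j % n)) (R * n) v ≤ R := by
      apply H.multi_block t n M hmatch hn ht0 R _ _ _ v
      rw [hjam]; omega
    -- the two ends, via the pair condition
    have hpp := hp hd (j % n - x - 1) (by omega) v
    have hb1 : j % n - x - 1 + 1 = j % n - x := by omega
    have hab : n - x - 1 - (j % n - x - 1) = n - j % n := by omega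
    rw [hb1, hab] at hpp
    -- identify the first end
    have he1 := H.tail_count t n M hn j v
    -- identify the last end
    have hstart : (j + (n - j % n) + R * n) % n = 0 := by
      rw [Nat.add_mul_mod_self_right]
      exact hjam
    have hquot : (j + (n - j % n) + R * n) / n % t = (j / n % t + (R + 1)) % t := by
      have h2 : j + (n - j % n) + R * n = n * (j / n + 1 + R) := by
        rw [hja]; ring
      rw [h2, Nat.mul_div_cancel_left _ hn]
      have h3 : j / n + 1 + R = j / n + (R + 1) := by omega
      rw [h3, ← Nat.mod_add_mod]
    have he2 : H.windowDeg (H.fEnum t n M) (j + (n - j % n) + R * n) (j % n - x) v =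
        ((Finset.range (j % n - x)).filter
          (fun q => H.inc (M ((j / n % t + (R + 1)) % t) q) v = true)).card := by
      rw [H.head_count t n M hn _ (j % n - x) hstart (by omega) v, hquot]
    rw [← he1, ← he2] at hpp
    omega

end Hypergraph'
namespace Hypergraph'

lemma edge_card_eq (H : Hypergraph') (t n : ℕ) (M : ℕ → ℕ → H.E)
    (hdecomp : ∀ e : H.E, ∃! p : ℕ × ℕ, p.1 < t ∧ p.2 < n ∧ M p.1 p.2 = e) :
    H.edgeCard = t * n := by
  letI := H.fintE
  have key : (Finset.range t ×ˢ Finset.range n).card = (Finset.univ : Finset H.E).card := by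
    apply Finset.card_nbij (fun p => M p.1 p.2)
    · intro p _; exact Finset.mem_univ _
    · intro p hp q hq hpq
      simp only [Finset.coe_product, Set.mem_prod, Finset.mem_coe, Finset.mem_range] at hp hq
      simp only at hpq
      exact (hdecomp (M q.1 q.2)).unique ⟨hp.1, hp.2, hpq⟩ ⟨hq.1, hq.2, rfl⟩
    · intro e _
      obtain ⟨p, hp, -⟩ := hdecomp e
      refine ⟨p, ?_, hp.2.2⟩
      simp only [Finset.coe_product, Set.mem_prod, Finset.mem_coe, Finset.mem_range]
      exact ⟨hp.1, hp.2.1⟩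
  have : H.edgeCard = (Finset.univ : Finset H.E).card := rfl
  rw [this, ← key, Finset.card_product, Finset.card_range, Finset.card_range]

lemma fEnum_ordering (H : Hypergraph') (t n : ℕ) (M : ℕ → ℕ → H.E)
    (hdecomp : ∀ e : H.E, ∃! p : ℕ × ℕ, p.1 < t ∧ p.2 < n ∧ M p.1 p.2 = e)
    (hn : 0 < n) :
    H.IsOrdering (H.fEnum t n M) := by
  have hε := H.edge_card_eq t n M hdecomp
  constructor
  · intro i
    unfold fEnum
    rw [hε, Nat.add_mul_div_right _ _ hn, Nat.add_mod_right, Nat.add_mul_mod_self_right]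
  · intro i j hi hj hij
    rw [hε] at hi hj
    have hdi : i / n < t := (Nat.div_lt_iff_lt_mul hn).2 hi
    have hdj : j / n < t := (Nat.div_lt_iff_lt_mul hn).2 hj
    unfold fEnum at hij
    rw [Nat.mod_eq_of_lt hdi, Nat.mod_eq_of_lt hdj] at hij
    have hy : (fun p : ℕ × ℕ => p.1 < t ∧ p.2 < n ∧ M p.1 p.2 = M (j / n) (j % n))
        (i / n, i % n) := ⟨hdi, Nat.mod_lt _ hn, hij⟩
    have hz : (fun p : ℕ × ℕ => p.1 < t ∧ p.2 < n ∧ M p.1 p.2 = M (j / n) (j % n))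
        (j / n, j % n) := ⟨hdj, Nat.mod_lt _ hn, rfl⟩
    have huniq := (hdecomp (M (j / n) (j % n))).unique hy hz
    have h1 : i / n = j / n := congrArg Prod.fst huniq
    have h2 : i % n = j % n := congrArg Prod.snd huniq
    have hdm1 := Nat.div_add_mod i n
    have hdm2 := Nat.div_add_mod j n
    have h3 : n * (i / n) = n * (j / n) := by rw [h1]
    omega
  · intro e
    obtain ⟨p, hp, -⟩ := hdecomp e
    refine ⟨p.2 + p.1 * n, ?_, ?_⟩
    · rw [hε]
      have h1 : (p.1 + 1) * n ≤ t * n := Nat.mul_le_mul_right n (by omega)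
      have h2 : (p.1 + 1) * n = p.1 * n + n := by ring
      omega
    · unfold fEnum
      rw [Nat.add_mul_div_right _ _ hn, Nat.add_mul_mod_self_right,
        Nat.div_eq_of_lt hp.2.1, Nat.mod_eq_of_lt hp.2.1, Nat.zero_add,
        Nat.mod_eq_of_lt hp.1]
      exact hp.2.2

lemma deg_eq_window (H : Hypergraph') (g : ℕ → H.E) (hord : H.IsOrdering g) (v : H.V) :
    H.degree v = H.windowDeg g 0 H.edgeCard v := by
  letI := H.fintE
  have hdeg : H.degree v = (Finset.univ.filter (fun e => H.inc e v = true)).card := rfl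
  rw [hdeg]
  unfold windowDeg
  symm
  apply Finset.card_nbij g
  · intro k hk
    simp only [Finset.coe_filter, Set.mem_setOf_eq, Finset.mem_coe, Finset.mem_filter, Finset.mem_range, Nat.zero_add] at hk ⊢
    exact ⟨Finset.mem_univ _, hk.2⟩
  · intro k hk l hl hkl
    simp only [Finset.coe_filter, Set.mem_setOf_eq, Finset.mem_range] at hk hl
    exact hord.inj k l hk.1 hl.1 hkl
  · intro e he
    simp only [Finset.coe_filter, Set.mem_setOf_eq, Finset.mem_univ, true_and] at he
    obtain ⟨i, hi, rfl⟩ := hord.surj e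
    refine ⟨i, ?_, rfl⟩
    simp only [Finset.coe_filter, Set.mem_setOf_eq, Finset.mem_range, Nat.zero_add]
    exact ⟨hi, he⟩

lemma window_prefix_le (H : Hypergraph') (g : ℕ → H.E) (j s₁ s : ℕ) (h : s₁ ≤ s) (v : H.V) :
    H.windowDeg g j s₁ v ≤ H.windowDeg g j s v := by
  have : s = s₁ + (s - s₁) := by omega
  rw [this, H.window_split]
  exact Nat.le_add_right _ _

lemma ordering_bound (H : Hypergraph') (r : ℕ) (hr : r < H.maxDegree)
    (g : ℕ → H.E) (hord : H.IsOrdering g) (s : ℕ)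
    (hOK : ∀ v, H.windowDeg g 0 s v ≤ r) : s ≤ H.edgeCard := by
  letI := H.fintV
  by_contra h
  push_neg at h
  have hr' : r < Finset.univ.sup H.degree := hr
  obtain ⟨v, -, hv⟩ := Finset.lt_sup_iff.mp hr'
  have h1 : H.degree v ≤ H.windowDeg g 0 s v := by
    rw [H.deg_eq_window g hord v]
    exact H.window_prefix_le g 0 _ s (by omega) v
  have := hOK v
  omega

end Hypergraph'
/-- Proposition: if `H` decomposes into matchings `M 0, …, M (t-1)`, each with `n`
edges (`M i m` is the edge of the `i`-th matching with label `m`), and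
`ms(ℓ_i, ℓ_{i+r}) ≥ n - x`, then `ms_r(H) ≥ rn - x` (non-cyclic version), resp.
`cms_r(H) ≥ rn - x` (cyclic version, indices mod `t`). -/
theorem matching_decomposition_both (H : Hypergraph') (t n x r : ℕ)
    (M : ℕ → ℕ → H.E)
    (hdecomp : ∀ e : H.E, ∃! p : ℕ × ℕ, p.1 < t ∧ p.2 < n ∧ M p.1 p.2 = e)
    (hmatch : ∀ i, i < t → ∀ v : H.V,
      ((Finset.range n).filter (fun m => H.inc (M i m) v = true)).card ≤ 1)
    (hx : x < n) (hr1 : 1 ≤ r) (hr : r < H.maxDegree) :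
    ((∀ i, i < t - r → H.pairOK (M i) (M (i + r)) n (n - x)) →
        r * n - x ≤ H.msr r) ∧
    ((∀ i, i < t → H.pairOK (M i) (M ((i + r) % t)) n (n - x)) →
        r * n - x ≤ H.cmsr r) := by
  have hn : 0 < n := by omega
  have hε := H.edge_card_eq t n M hdecomp
  -- the edge set is nonempty, hence t > 0
  have hε0 : 0 < H.edgeCard := by
    letI := H.fintV
    letI := H.fintE
    have hr' : r < Finset.univ.sup H.degree := hr
    obtain ⟨v, -, hv⟩ := Finset.lt_sup_iff.mp hr'
    have hdc : H.degree v ≤ H.edgeCard := by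
      have h1 : H.degree v = (Finset.univ.filter (fun e => H.inc e v = true)).card := rfl
      have h2 : H.edgeCard = (Finset.univ : Finset H.E).card := rfl
      rw [h1, h2]
      exact Finset.card_filter_le _ _
    omega
  have ht0 : 0 < t := by
    rcases Nat.eq_zero_or_pos t with h | h
    · subst h; simp at hε; omega
    · exact h
  have hord := H.fEnum_ordering t n M hdecomp hn
  -- the maximum degree is at most t, hence r < t
  have hΔt : H.maxDegree ≤ t := by
    letI := H.fintV
    apply Finset.sup_le
    intro v _
    rw [H.deg_eq_window _ hord v, hε]
    exact H.multi_block t n M hmatch hn ht0 t 0 (t * n)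
      (by rw [Nat.zero_mod]; omega) v
  have ht : r < t := lt_of_lt_of_le hr hΔt
  have hslt : r * n - x < H.edgeCard := by
    have h1 : r * n < t * n := Nat.mul_lt_mul_of_pos_right ht hn
    omega
  -- upper bounds for the sSup sets
  have hbddM : ∀ s ∈ {s | ∃ f, H.IsOrdering f ∧ H.msOK f r s}, s ≤ H.edgeCard := by
    rintro s ⟨g, hg, hOK⟩
    apply H.ordering_bound r hr g hg s
    intro v
    apply hOK 0 v
    rw [Nat.zero_add]
    have hdm := Nat.div_add_mod s H.edgeCard
    have hml : s % H.edgeCard < H.edgeCard := Nat.mod_lt _ hε0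
    have hh : (s / H.edgeCard + 1) * H.edgeCard = H.edgeCard * (s / H.edgeCard) + H.edgeCard := by
      ring
    omega
  have hbddC : ∀ s ∈ {s | ∃ f, H.IsOrdering f ∧ H.cmsOK f r s}, s ≤ H.edgeCard := by
    rintro s ⟨g, hg, hOK⟩
    exact H.ordering_bound r hr g hg s (fun v => hOK 0 v)
  constructor
  · -- non-cyclic version
    intro hNC
    apply le_csSup ⟨H.edgeCard, hbddM⟩
    refine ⟨H.fEnum t n M, hord, ?_⟩
    intro j v hj
    have hd0 : (r * n - x) / H.edgeCard = 0 := Nat.div_eq_of_lt hslt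
    rw [hd0, Nat.one_mul, hε] at hj
    apply H.main_window t n x r M hmatch hn ht0 hx hr1 j v
    intro hxd
    -- the window really reaches block j / n + r, so j / n + r < t
    have hdm := Nat.div_add_mod j n
    have hmlt : j % n < n := Nat.mod_lt _ hn
    have hblock : (j / n + r) * n < t * n := by
      have h1 : (j / n + r) * n = n * (j / n) + r * n := by ring
      omega
    have hlt : j / n + r < t := Nat.lt_of_mul_lt_mul_right hblock
    have h1 : j / n % t = j / n := Nat.mod_eq_of_lt (by omega)
    rw [h1, Nat.mod_eq_of_lt hlt]
    exact hNC (j / n) (by omega)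
  · -- cyclic version
    intro hC
    apply le_csSup ⟨H.edgeCard, hbddC⟩
    refine ⟨H.fEnum t n M, hord, ?_⟩
    intro j v
    apply H.main_window t n x r M hmatch hn ht0 hx hr1 j v
    intro _
    exact hC (j / n % t) (Nat.mod_lt _ ht0)
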